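/- Let $a,b,v$ be elements of a Coxeter group with $\ell(av)=\ell(a)+\ell(v)$ and $\ell(bv)=\ell(b)+\ell(v)$. Then $av < bv$ in the Bruhat order if and only if $a < b$ in the Bruhat order. -/

import Mathlib

namespace PaperStmt

open scoped Classical

variable {B : Type*} {W : Type*} [Group W] {M : CoxeterMatrix B}

/-- Bruhat (strong) cover: `v = t * u` for a reflection `t`, with `ℓ v = ℓ u + 1`. -/
def BruhatCov (cs : CoxeterSystem M W) (u v : W) : Prop :=
  cs.length v = cs.length u + 1 ∧ ∃ t : W, cs.IsReflection t ∧ v = t * u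

/-- The Bruhat (strong) order, generated by the covering relations. -/
def BruhatLe (cs : CoxeterSystem M W) : W → W → Prop :=
  Relation.ReflTransGen (BruhatCov cs)

/-- Strict Bruhat order. -/
def BruhatLt (cs : CoxeterSystem M W) (u v : W) : Prop :=
  BruhatLe cs u v ∧ u ≠ v

/-- Left weak order: `u ≤_L v` iff `ℓ(v u⁻¹) + ℓ u = ℓ v`. -/
def leftLe (cs : CoxeterSystem M W) (u v : W) : Prop :=
  cs.length (v * u⁻¹) + cs.length u = cs.length v

/-- Right weak order: `u ≤_R v` iff `ℓ u + ℓ(u⁻¹ v) = ℓ v`. -/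
def rightLe (cs : CoxeterSystem M W) (u v : W) : Prop :=
  cs.length u + cs.length (u⁻¹ * v) = cs.length v

/-- Demazure action of a simple reflection: `φ_s(x) = s x` if `s x > x`, else `x`. -/
noncomputable def phi (cs : CoxeterSystem M W) (i : B) (x : W) : W :=
  if BruhatLt cs x (cs.simple i * x) then cs.simple i * x else x

/-- Anti-Demazure action: `ψ_s(x) = s x` if `s x < x`, else `x`. -/
noncomputable def psi (cs : CoxeterSystem M W) (i : B) (x : W) : W :=
  if BruhatLt cs (cs.simple i * x) x then cs.simple i * x else x

/-- Right anti-Demazure action: `ψ^R_s(x) = x s` if `x s < x`, else `x`. -/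
noncomputable def psiR (cs : CoxeterSystem M W) (i : B) (x : W) : W :=
  if BruhatLt cs (x * cs.simple i) x then x * cs.simple i else x

/-- `φ_w` along a word `w = s_1 ⋯ s_n`: `φ_{s_1} ∘ ⋯ ∘ φ_{s_n}`. -/
noncomputable def phiWord (cs : CoxeterSystem M W) (ω : List B) (x : W) : W :=
  ω.foldr (phi cs) x

/-- `ψ_w` along a word `w = s_1 ⋯ s_n`: `ψ_{s_1} ∘ ⋯ ∘ ψ_{s_n}`. -/
noncomputable def psiWord (cs : CoxeterSystem M W) (ω : List B) (x : W) : W :=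
  ω.foldr (psi cs) x

/-- `ψ^R_w` along a word `w = s_1 ⋯ s_n`: `ψ^R_{s_n} ∘ ⋯ ∘ ψ^R_{s_1}`. -/
noncomputable def psiRWord (cs : CoxeterSystem M W) (ω : List B) (x : W) : W :=
  ω.foldl (fun y i => psiR cs i y) x

namespace Aux

open CoxeterSystem List

variable (cs : CoxeterSystem M W)

local prefix:100 "σ" => cs.simple
local prefix:100 "π" => cs.wordProd
local prefix:100 "ℓ" => cs.length

noncomputable def eFun (i : B) : W × ZMod 2 → W × ZMod 2 :=
  fun p => (σ i * p.1 * σ i, p.2 + if p.1 = σ i then 1 else 0)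

lemma zmod2_add_self (x : ZMod 2) : x + x = 0 := by revert x; decide

lemma conj_simple_eq_iff (i : B) (t x : W) :
    (σ i * t * σ i = x) ↔ (t = σ i * x * σ i) := by
  constructor
  · rintro rfl; simp [mul_assoc, cs.simple_mul_simple_cancel_left]
  · rintro rfl; simp [mul_assoc, cs.simple_mul_simple_cancel_left]

lemma eFun_invol (i : B) (p : W × ZMod 2) : eFun cs i (eFun cs i p) = p := by
  obtain ⟨t, ε⟩ := p
  simp only [eFun]
  have h1 : σ i * t * σ i = σ i ↔ t = σ i := by
    rw [conj_simple_eq_iff]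
    simp [cs.simple_mul_simple_cancel_left]
  ext
  · simp [mul_assoc, cs.simple_mul_simple_cancel_left]
  · simp only [h1]
    split_ifs with h
    · simp [add_assoc, zmod2_add_self]
    · simp

noncomputable def ePerm (i : B) : Equiv.Perm (W × ZMod 2) :=
  ⟨eFun cs i, eFun cs i, eFun_invol cs i, eFun_invol cs i⟩

lemma ePerm_apply (i : B) (t : W) (ε : ZMod 2) :
    ePerm cs i (t, ε) = (σ i * t * σ i, ε + if t = σ i then 1 else 0) := rfl

lemma pow_conj_aux (i j : B) (k : ℕ) :
    (σ j * σ i) * ((σ j * σ i) ^ k * σ j) * (σ i * σ j) = (σ j * σ i) ^ (k + 2) * σ j := by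
  calc (σ j * σ i) * ((σ j * σ i) ^ k * σ j) * (σ i * σ j)
      = ((σ j * σ i) * (σ j * σ i) ^ k) * (σ j * (σ i * σ j)) := by simp only [mul_assoc]
    _ = ((σ j * σ i) ^ k * (σ j * σ i)) * (σ j * (σ i * σ j)) := by rw [← pow_succ', pow_succ]
    _ = (σ j * σ i) ^ (k + 2) * σ j := by
        conv_rhs => rw [show k + 2 = (k + 1) + 1 from rfl, pow_succ, pow_succ]
        simp only [mul_assoc]

lemma ePerm_pow_formula (i j : B) (n : ℕ) (t : W) (ε : ZMod 2) :
    ((ePerm cs i * ePerm cs j) ^ n) (t, ε) =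
      ((σ i * σ j) ^ n * t * ((σ i * σ j) ^ n)⁻¹,
        ε + ∑ k ∈ Finset.range (2 * n),
              (if t = (σ j * σ i) ^ k * σ j then (1 : ZMod 2) else 0)) := by
  have hinv : (σ i * σ j)⁻¹ = σ j * σ i := by
    rw [mul_inv_rev, cs.inv_simple, cs.inv_simple]
  induction n generalizing t ε with
  | zero => simp
  | succ n ih =>
    have hstep : ((ePerm cs i * ePerm cs j) ^ (n + 1)) (t, ε)
        = ((ePerm cs i * ePerm cs j) ^ n) ((ePerm cs i * ePerm cs j) (t, ε)) := by
      rw [pow_succ, Equiv.Perm.mul_apply]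
    have happ : (ePerm cs i * ePerm cs j) (t, ε)
        = ((σ i * σ j) * t * (σ i * σ j)⁻¹,
            ε + ((if t = σ j then (1 : ZMod 2) else 0)
              + (if t = σ j * σ i * σ j then (1 : ZMod 2) else 0))) := by
      show ePerm cs i (ePerm cs j (t, ε)) = _
      rw [ePerm_apply, ePerm_apply]
      have h2 : σ j * t * σ j = σ i ↔ t = σ j * σ i * σ j := by
        rw [conj_simple_eq_iff]
      rw [Prod.mk.injEq]
      constructor
      · rw [hinv]
        simp only [mul_assoc]
      · simp only [h2]
        ring
    have hconj : ∀ k : ℕ,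
        ((σ i * σ j) * t * (σ i * σ j)⁻¹ = (σ j * σ i) ^ k * σ j)
          ↔ (t = (σ j * σ i) ^ (k + 2) * σ j) := by
      intro k
      rw [hinv]
      constructor
      · intro h
        have h2 := congrArg (fun x => (σ j * σ i) * x * (σ i * σ j)) h
        rw [pow_conj_aux] at h2
        rw [← h2]
        simp [mul_assoc, cs.simple_mul_simple_cancel_left, cs.simple_mul_simple_self]
      · rintro rfl
        rw [← pow_conj_aux cs i j k]
        simp [mul_assoc, cs.simple_mul_simple_cancel_left, cs.simple_mul_simple_self]
    rw [hstep, happ, ih]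
    rw [Prod.mk.injEq]
    constructor
    · simp only [pow_succ, mul_inv_rev, cs.inv_simple, mul_assoc]
    · simp only [hconj]
      rw [show 2 * (n + 1) = (2 * n + 1) + 1 by ring, Finset.sum_range_succ',
        Finset.sum_range_succ']
      simp only [show ∀ x : ℕ, x + 1 + 1 = x + 2 from fun _ => rfl, Nat.zero_add,
        pow_zero, one_mul, pow_one]
      ring
lemma braid (i j : B) : (ePerm cs i * ePerm cs j) ^ (M i j) = 1 := by
  refine Equiv.ext fun p => ?_
  obtain ⟨t, ε⟩ := p
  rw [ePerm_pow_formula, cs.simple_mul_simple_pow i j]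
  have hsum : ∑ k ∈ Finset.range (2 * M.M i j),
      (if t = (σ j * σ i) ^ k * σ j then (1 : ZMod 2) else 0) = 0 := by
    rw [two_mul, Finset.sum_range_add]
    have hc : ∀ k : ℕ, (σ j * σ i) ^ (M.M i j + k) * σ j = (σ j * σ i) ^ k * σ j := by
      intro k
      rw [pow_add, cs.simple_mul_simple_pow' i j, one_mul]
    simp only [hc]
    exact zmod2_add_self _
  rw [hsum]
  simp

/-- The sign/permutation representation. -/
noncomputable def rho : W →* Equiv.Perm (W × ZMod 2) :=
  cs.lift ⟨fun i => ePerm cs i, fun i j => braid cs i j⟩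

lemma rho_simple (i : B) : rho cs (σ i) = ePerm cs i :=
  cs.lift_apply_simple _ i

lemma conj_inv_eq_iff (g t x : W) : (g⁻¹ * x * g = t) ↔ (g * t * g⁻¹ = x) := by
  constructor
  · rintro rfl; simp [mul_assoc]
  · rintro rfl; simp [mul_assoc]

lemma rho_wordProd (ω : List B) (t : W) (ε : ZMod 2) :
    rho cs (π ω) (t, ε)
      = (π ω * t * (π ω)⁻¹, ε + (((cs.rightInvSeq ω).count t : ℕ) : ZMod 2)) := by
  induction ω generalizing t ε with
  | nil => simp [wordProd_nil]
  | cons i ω ih =>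
    rw [wordProd_cons, map_mul, Equiv.Perm.mul_apply, ih, rho_simple, ePerm_apply]
    have hris : cs.rightInvSeq (i :: ω) = ((π ω)⁻¹ * σ i * π ω) :: cs.rightInvSeq ω := rfl
    rw [hris, List.count_cons, Prod.mk.injEq]
    constructor
    · simp only [mul_inv_rev, cs.inv_simple, mul_assoc]
    · have hcond : ((π ω)⁻¹ * σ i * π ω = t) ↔ (π ω * t * (π ω)⁻¹ = σ i) :=
        conj_inv_eq_iff _ _ _
      simp only [beq_iff_eq, hcond]
      push_cast
      ring

lemma count_ris_parity {ω₁ ω₂ : List B} (h : π ω₁ = π ω₂) (t : W) :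
    (((cs.rightInvSeq ω₁).count t : ℕ) : ZMod 2)
      = (((cs.rightInvSeq ω₂).count t : ℕ) : ZMod 2) := by
  have h1 := rho_wordProd cs ω₁ t 0
  have h2 := rho_wordProd cs ω₂ t 0
  rw [h, h2] at h1
  have := congrArg Prod.snd h1
  simpa using this.symm

lemma count_map_conj (g : W) (l : List W) (t : W) :
    (l.map (fun x => g⁻¹ * x * g)).count t = l.count (g * t * g⁻¹) := by
  induction l with
  | nil => simp
  | cons a l ih =>
    simp only [List.map_cons, List.count_cons, ih]
    congr 1
    have h1 : (g⁻¹ * a * g = t) ↔ (a = g * t * g⁻¹) := by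
      rw [conj_inv_eq_iff]; exact eq_comm
    simp only [beq_iff_eq, h1]

lemma ris_append (α β : List B) :
    cs.rightInvSeq (α ++ β)
      = (cs.rightInvSeq α).map (fun x => (π β)⁻¹ * x * π β) ++ cs.rightInvSeq β := by
  induction α with
  | nil => simp
  | cons a α ih =>
    have h1 : cs.rightInvSeq (a :: (α ++ β))
        = ((π (α ++ β))⁻¹ * σ a * π (α ++ β)) :: cs.rightInvSeq (α ++ β) := rfl
    have h2 : cs.rightInvSeq (a :: α) = ((π α)⁻¹ * σ a * π α) :: cs.rightInvSeq α := rfl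
    rw [List.cons_append, h1, h2, ih, List.map_cons, List.cons_append]
    congr 1
    rw [wordProd_append, mul_inv_rev]
    simp only [mul_assoc]

lemma ris_eq_map_lis (υ : List B) :
    cs.rightInvSeq υ = (cs.leftInvSeq υ).map (fun x => (π υ)⁻¹ * x * π υ) := by
  induction υ with
  | nil => simp
  | cons a υ ih =>
    show ((π υ)⁻¹ * σ a * π υ) :: cs.rightInvSeq υ = _
    have hlis : cs.leftInvSeq (a :: υ) = σ a :: (cs.leftInvSeq υ).map (MulAut.conj (σ a)) := rfl
    rw [hlis, List.map_cons, List.map_map]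
    congr 1
    · rw [wordProd_cons, mul_inv_rev, cs.inv_simple]
      simp [mul_assoc, cs.simple_mul_simple_cancel_left]
    · rw [ih]
      congr 1
      funext x
      simp only [Function.comp_apply, MulAut.conj_apply, wordProd_cons, mul_inv_rev,
        cs.inv_simple, mul_assoc, cs.simple_mul_simple_cancel_left]

lemma count_lis_eq_count_ris (υ : List B) (i : B) :
    (cs.leftInvSeq υ).count (π υ * σ i * (π υ)⁻¹) = (cs.rightInvSeq υ).count (σ i) := by
  rw [ris_eq_map_lis, count_map_conj]

lemma zmod2_cast_odd (c : ℕ) : (((c + (1 + c)) : ℕ) : ZMod 2) = 1 := by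
  push_cast
  have h : (c : ZMod 2) + (c : ZMod 2) = 0 := zmod2_add_self _
  calc (c : ZMod 2) + (1 + c) = ((c : ZMod 2) + c) + 1 := by ring
    _ = 1 := by rw [h]; ring

lemma count_ris_self {t : W} (ht : cs.IsReflection t) (φ : List B) (hφ : π φ = t) :
    (((cs.rightInvSeq φ).count t : ℕ) : ZMod 2) = 1 := by
  obtain ⟨u, i, rfl⟩ := ht
  obtain ⟨υ, hυ⟩ := cs.wordProd_surjective u
  set t := u * σ i * u⁻¹ with hdef
  have hπ : π (υ ++ ([i] ++ υ.reverse)) = t := by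
    rw [wordProd_append, wordProd_append, wordProd_reverse, wordProd_singleton, hυ,
      ← mul_assoc, hdef]
  rw [count_ris_parity cs (hφ.trans hπ.symm) t]
  rw [ris_append, ris_append, List.count_append, List.count_append]
  have hπrev : π υ.reverse = u⁻¹ := by rw [wordProd_reverse, hυ]
  have h1 : ((cs.rightInvSeq [i]).map
      (fun x => (π υ.reverse)⁻¹ * x * π υ.reverse)).count t = 1 := by
    rw [cs.rightInvSeq_singleton, hπrev]
    simp [hdef, mul_assoc]
  have h2 : ((cs.rightInvSeq υ).map
      (fun x => (π ([i] ++ υ.reverse))⁻¹ * x * π ([i] ++ υ.reverse))).count t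
        = (cs.rightInvSeq υ).count (σ i) := by
    have hg : π ([i] ++ υ.reverse) = σ i * u⁻¹ := by
      rw [wordProd_append, wordProd_singleton, hπrev]
    rw [hg, count_map_conj]
    congr 1
    rw [hdef]
    rw [mul_inv_rev, inv_inv, cs.inv_simple]
    simp only [mul_assoc]
    simp [cs.simple_mul_simple_cancel_left, mul_assoc]
  have h3 : (cs.rightInvSeq υ.reverse).count t = (cs.rightInvSeq υ).count (σ i) := by
    rw [cs.rightInvSeq_reverse, List.count_reverse, hdef, ← hυ]
    exact count_lis_eq_count_ris cs υ i
  rw [h1, h2, h3]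
  exact zmod2_cast_odd _

lemma mem_ris_of_right_inversion {t : W} (ht : cs.IsReflection t) {ω : List B}
    (hred : cs.IsReduced ω) (hlt : ℓ (π ω * t) < ℓ (π ω)) : t ∈ cs.rightInvSeq ω := by
  obtain ⟨ξ, hξred, hξ⟩ := cs.exists_reduced_word' (π ω * t)
  obtain ⟨φ, hφ⟩ := cs.wordProd_surjective t
  have hππ : π (ξ ++ φ) = π ω := by
    rw [wordProd_append, ← hξ, hφ, mul_assoc, ht.mul_self, mul_one]
  by_contra hmem
  have hcnt0 : (cs.rightInvSeq ω).count t = 0 := List.count_eq_zero.mpr hmem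
  have hpar := count_ris_parity cs hππ t
  rw [hcnt0] at hpar
  rw [ris_append, List.count_append] at hpar
  have hξ0 : (cs.rightInvSeq ξ).count t = 0 := by
    rw [List.count_eq_zero]
    intro hmem'
    have := (cs.isRightInversion_of_mem_rightInvSeq hξred hmem').2
    rw [← hξ] at this
    rw [mul_assoc, ht.mul_self, mul_one] at this
    omega
  have hmap0 : ((cs.rightInvSeq ξ).map (fun x => (π φ)⁻¹ * x * π φ)).count t = 0 := by
    rw [hφ, count_map_conj]
    rw [List.count_eq_zero] at hξ0 ⊢
    intro hmem'
    apply hξ0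
    rwa [ht.mul_self, one_mul, ht.inv] at hmem'
  rw [hmap0] at hpar
  have hself := count_ris_self cs ht φ hφ
  rw [Nat.zero_add] at hpar
  rw [hself, Nat.cast_zero] at hpar
  exact one_ne_zero hpar

lemma strong_exchange_left {t : W} (ht : cs.IsReflection t) {ω : List B}
    (hred : cs.IsReduced ω) (hlt : ℓ (t * π ω) < ℓ (π ω)) :
    ∃ j, j < ω.length ∧ t * π ω = π (ω.eraseIdx j) := by
  have hrev : cs.IsReduced ω.reverse := (cs.isReduced_reverse_iff ω).mpr hred
  have h1 : ℓ (π ω.reverse * t) < ℓ (π ω.reverse) := by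
    rw [wordProd_reverse]
    have e : (π ω)⁻¹ * t = (t * π ω)⁻¹ := by rw [mul_inv_rev, ht.inv]
    rw [e, cs.length_inv, cs.length_inv]
    exact hlt
  have hmem := mem_ris_of_right_inversion cs ht hrev h1
  rw [cs.rightInvSeq_reverse] at hmem
  rw [List.mem_reverse] at hmem
  obtain ⟨j, hj, hget⟩ := List.getElem_of_mem hmem
  have hjlen : j < ω.length := by
    have := cs.length_leftInvSeq ω
    omega
  refine ⟨j, hjlen, ?_⟩
  have hgetD : (cs.leftInvSeq ω).getD j 1 = t := by
    rw [List.getD_eq_getElem _ _ hj, hget]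
  rw [← hgetD]
  exact cs.getD_leftInvSeq_mul_wordProd ω j

/-! ### Bruhat order lemmas -/

lemma cov_mul_simple_ascent (w : W) (i : B) (h : ℓ (w * σ i) = ℓ w + 1) :
    BruhatCov cs w (w * σ i) := by
  refine ⟨h, w * σ i * w⁻¹, ⟨w, i, rfl⟩, ?_⟩
  simp [mul_assoc]

lemma cov_mul_simple_descent (w : W) (i : B) (h : ℓ (w * σ i) + 1 = ℓ w) :
    BruhatCov cs (w * σ i) w := by
  refine ⟨h.symm, w * σ i * w⁻¹, ⟨w, i, rfl⟩, ?_⟩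
  simp [mul_assoc]

lemma le_mul_simple_of_le (i : B) {u w : W} (h : BruhatLe cs u w)
    (hu : ℓ (u * σ i) = ℓ u + 1) (hw : ℓ (w * σ i) = ℓ w + 1) :
    BruhatLe cs (u * σ i) (w * σ i) := by
  have key : ∀ u, BruhatLe cs u w → ℓ (u * σ i) = ℓ u + 1 →
      BruhatLe cs (u * σ i) (w * σ i) := by
    intro u h
    induction h using Relation.ReflTransGen.head_induction_on with
    | refl => intro _; exact Relation.ReflTransGen.refl
    | @head x c hrel hle ih =>
      intro ha
      obtain ⟨hlen, t, ht, hc⟩ := hrel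
      rcases cs.length_mul_simple c i with hasc | hdesc
      · have hcov : BruhatCov cs (x * σ i) (c * σ i) := by
          refine ⟨by omega, t, ht, ?_⟩
          rw [hc, mul_assoc]
        exact Relation.ReflTransGen.head hcov (ih hasc)
      · -- descent case: show x * σ i = c by the strong exchange property
        obtain ⟨ρ, hρred, hρ⟩ := cs.exists_reduced_word' (c * σ i)
        have hρlen : ρ.length = ℓ (c * σ i) := by rw [← hρred, ← hρ]
        have hπω : π (ρ ++ [i]) = c := by
          rw [wordProd_append, wordProd_singleton, ← hρ, cs.simple_mul_simple_cancel_right]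
        have hωred : cs.IsReduced (ρ ++ [i]) := by
          show ℓ (π (ρ ++ [i])) = _
          rw [hπω, List.length_append, List.length_singleton]
          omega
        have hta : t * π (ρ ++ [i]) = x := by
          rw [hπω, hc, ← mul_assoc, ht.mul_self, one_mul]
        have hlt : ℓ (t * π (ρ ++ [i])) < ℓ (π (ρ ++ [i])) := by
          rw [hta, hπω]
          omega
        obtain ⟨j, hj, hex⟩ := strong_exchange_left cs ht hωred hlt
        rw [hta] at hex
        by_cases hjρ : j < ρ.length
        · exfalso
          rw [List.eraseIdx_append_of_lt_length hjρ] at hex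
          have hxs : x * σ i = π (ρ.eraseIdx j) := by
            rw [hex, wordProd_append, wordProd_singleton, cs.simple_mul_simple_cancel_right]
          have hlen1 : ℓ (x * σ i) ≤ (ρ.eraseIdx j).length := by
            rw [hxs]; exact cs.length_wordProd_le _
          have hlen2 : (ρ.eraseIdx j).length = ρ.length - 1 := by
            rw [List.length_eraseIdx]
            simp [hjρ]
          omega
        · have hj' : j = ρ.length := by
            rw [List.length_append, List.length_singleton] at hj
            omega
          rw [hj', List.eraseIdx_append_of_length_le (le_refl _)] at hex
          simp only [Nat.sub_self, List.eraseIdx_zero, List.tail_cons, List.append_nil] at hex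
          have hxc : x * σ i = c := by
            rw [hex, ← hρ, cs.simple_mul_simple_cancel_right]
          rw [hxc]
          exact Relation.ReflTransGen.tail hle (cov_mul_simple_ascent cs w i hw)
  exact key u h hu


lemma exists_reduced_sublist (ω : List B) :
    ∃ φ, φ.Sublist ω ∧ cs.IsReduced φ ∧ π φ = π ω := by
  induction ω using List.reverseRecOn with
  | nil =>
    refine ⟨[], List.Sublist.refl _, ?_, rfl⟩
    show ℓ (π []) = _
    simp
  | append_singleton ω₀ i ih =>
    obtain ⟨φ₀, hsub, hred, hπ⟩ := ih
    have hφ₀len : ℓ (π ω₀) = φ₀.length := by rw [← hπ]; exact hred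
    rcases cs.length_mul_simple (π ω₀) i with hasc | hdesc
    · refine ⟨φ₀ ++ [i], hsub.append (List.Sublist.refl _), ?_, ?_⟩
      · show ℓ (π (φ₀ ++ [i])) = _
        rw [wordProd_append, wordProd_singleton, hπ, List.length_append,
          List.length_singleton]
        omega
      · simp [wordProd_append, hπ]
    · have hlt : ℓ (π φ₀ * σ i) < ℓ (π φ₀) := by rw [hπ]; omega
      have hmem := mem_ris_of_right_inversion cs (cs.isReflection_simple i) hred hlt
      obtain ⟨j, hj, hget⟩ := List.getElem_of_mem hmem
      have hjlen : j < φ₀.length := by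
        have := cs.length_rightInvSeq φ₀
        omega
      have herase := cs.wordProd_mul_getD_rightInvSeq φ₀ j
      have hgetD : (cs.rightInvSeq φ₀).getD j 1 = σ i := by
        rw [List.getD_eq_getElem _ _ hj, hget]
      rw [hgetD] at herase
      have hπe : π (φ₀.eraseIdx j) = π (ω₀ ++ [i]) := by
        rw [← herase, hπ, wordProd_append, wordProd_singleton]
      refine ⟨φ₀.eraseIdx j,
        (List.eraseIdx_sublist φ₀ j).trans (hsub.trans (List.sublist_append_left ω₀ [i])),
        ?_, hπe⟩
      show ℓ (π (φ₀.eraseIdx j)) = _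
      rw [← herase, hπ]
      have hel : (φ₀.eraseIdx j).length = φ₀.length - 1 := by
        rw [List.length_eraseIdx]
        simp [hjlen]
      omega

lemma exists_reduced_sublist_of_le {u w : W} (h : BruhatLe cs u w) :
    ∀ ω : List B, cs.IsReduced ω → π ω = w →
      ∃ φ, φ.Sublist ω ∧ cs.IsReduced φ ∧ π φ = u := by
  induction h with
  | refl => exact fun ω hred hπ => ⟨ω, List.Sublist.refl _, hred, hπ⟩
  | @tail m c h1 h2 ih =>
    intro ω hred hπ
    obtain ⟨hlen, t, ht, hc⟩ := h2
    have htm : t * π ω = m := by rw [hπ, hc, ← mul_assoc, ht.mul_self, one_mul]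
    have hlt : ℓ (t * π ω) < ℓ (π ω) := by
      rw [htm, hπ]
      omega
    obtain ⟨j, hj, hex⟩ := strong_exchange_left cs ht hred hlt
    rw [htm] at hex
    obtain ⟨φb, hsub, hbred, hbπ⟩ := exists_reduced_sublist cs (ω.eraseIdx j)
    obtain ⟨φ, hφsub, hφred, hφπ⟩ := ih φb hbred (hbπ.trans hex.symm)
    exact ⟨φ, (hφsub.trans hsub).trans (List.eraseIdx_sublist ω j), hφred, hφπ⟩

lemma le_of_sublist : ∀ {ω φ : List B}, cs.IsReduced ω → cs.IsReduced φ → φ.Sublist ω →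
    BruhatLe cs (π φ) (π ω) := by
  intro ω
  induction ω using List.reverseRecOn with
  | nil =>
    intro φ _ _ hsub
    rw [List.sublist_nil.mp hsub]
    exact Relation.ReflTransGen.refl
  | append_singleton ω₀ i ih =>
    intro φ hredω hredφ hsub
    have hred₀ : cs.IsReduced ω₀ := by
      have := CoxeterSystem.IsReduced.take hredω (j := ω₀.length)
      rwa [List.take_left] at this
    have hlω : ℓ (π ω₀) = ω₀.length := hred₀
    have hlωi : ℓ (π (ω₀ ++ [i])) = ω₀.length + 1 := by
      rw [hredω]
      simp
    have hπωi : π (ω₀ ++ [i]) = π ω₀ * σ i := by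
      rw [wordProd_append, wordProd_singleton]
    have hasc : ℓ (π ω₀ * σ i) = ℓ (π ω₀) + 1 := by
      rw [← hπωi, hlωi, hlω]
    rcases List.sublist_append_iff.mp hsub with ⟨φ₁, φ₂, rfl, hs1, hs2⟩
    rcases List.sublist_singleton.mp hs2 with rfl | rfl
    · rw [List.append_nil] at hredφ ⊢
      have hle := ih hred₀ hredφ hs1
      rw [hπωi]
      exact Relation.ReflTransGen.tail hle (cov_mul_simple_ascent cs (π ω₀) i hasc)
    · have hφ₁red : cs.IsReduced φ₁ := by
        have := CoxeterSystem.IsReduced.take hredφ (j := φ₁.length)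
        rwa [List.take_left] at this
      have hascφ : ℓ (π φ₁ * σ i) = ℓ (π φ₁) + 1 := by
        have h1 : ℓ (π (φ₁ ++ [i])) = φ₁.length + 1 := by
          rw [hredφ]
          simp
        have h2 : π (φ₁ ++ [i]) = π φ₁ * σ i := by
          rw [wordProd_append, wordProd_singleton]
        rw [← h2, h1, hφ₁red]
      have hle := ih hred₀ hφ₁red hs1
      have := le_mul_simple_of_le cs i hle hascφ hasc
      rw [hπωi, wordProd_append, wordProd_singleton]
      exact this

lemma le_mul_simple_of_le_descent (i : B) {u w : W} (h : BruhatLe cs u w)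
    (hu : ℓ (u * σ i) + 1 = ℓ u) (hw : ℓ (w * σ i) + 1 = ℓ w) :
    BruhatLe cs (u * σ i) (w * σ i) := by
  obtain ⟨ω', hω'red, hω'⟩ := cs.exists_reduced_word' (w * σ i)
  have hπω : π (ω' ++ [i]) = w := by
    rw [wordProd_append, wordProd_singleton, ← hω', cs.simple_mul_simple_cancel_right]
  have hω'len : ℓ (π ω') = ω'.length := hω'red
  have hωred : cs.IsReduced (ω' ++ [i]) := by
    show ℓ (π (ω' ++ [i])) = _
    rw [hπω, List.length_append, List.length_singleton]
    rw [← hω'] at hω'len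
    omega
  obtain ⟨φ, hsub, hφred, hφπ⟩ := exists_reduced_sublist_of_le cs h (ω' ++ [i]) hωred hπω
  rcases List.sublist_append_iff.mp hsub with ⟨φ₁, φ₂, rfl, hs1, hs2⟩
  rcases List.sublist_singleton.mp hs2 with rfl | rfl
  · rw [List.append_nil] at hφred hφπ
    have hle : BruhatLe cs u (w * σ i) := by
      rw [← hφπ, hω']
      exact le_of_sublist cs hω'red hφred hs1
    exact Relation.ReflTransGen.head (cov_mul_simple_descent cs u i hu) hle
  · have hus : u * σ i = π φ₁ := by
      rw [← hφπ, wordProd_append, wordProd_singleton, cs.simple_mul_simple_cancel_right]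
    have hφ₁red : cs.IsReduced φ₁ := by
      have := CoxeterSystem.IsReduced.take hφred (j := φ₁.length)
      rwa [List.take_left] at this
    rw [hus, hω']
    exact le_of_sublist cs hω'red hφ₁red hs1

lemma le_mul_simple_iff (i : B) (a b : W) (ha : ℓ (a * σ i) = ℓ a + 1)
    (hb : ℓ (b * σ i) = ℓ b + 1) :
    BruhatLe cs a b ↔ BruhatLe cs (a * σ i) (b * σ i) := by
  constructor
  · intro h
    exact le_mul_simple_of_le cs i h ha hb
  · intro h
    have hdu : ℓ (a * σ i * σ i) + 1 = ℓ (a * σ i) := by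
      rw [cs.simple_mul_simple_cancel_right, ha]
    have hdw : ℓ (b * σ i * σ i) + 1 = ℓ (b * σ i) := by
      rw [cs.simple_mul_simple_cancel_right, hb]
    have := le_mul_simple_of_le_descent cs i h hdu hdw
    rwa [cs.simple_mul_simple_cancel_right, cs.simple_mul_simple_cancel_right] at this

lemma le_mul_word : ∀ (ω : List B), cs.IsReduced ω → ∀ a b : W,
    ℓ (a * π ω) = ℓ a + ℓ (π ω) → ℓ (b * π ω) = ℓ b + ℓ (π ω) →
    (BruhatLe cs a b ↔ BruhatLe cs (a * π ω) (b * π ω)) := by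
  intro ω
  induction ω with
  | nil => simp
  | cons i ω ih =>
    intro hred a b ha hb
    have hredω : cs.IsReduced ω := by
      have := CoxeterSystem.IsReduced.drop hred (j := 1)
      simpa using this
    have hπc : π (i :: ω) = σ i * π ω := cs.wordProd_cons i ω
    have hlen : ℓ (π (i :: ω)) = ω.length + 1 := by
      rw [hred]
      simp
    have hlω : ℓ (π ω) = ω.length := hredω
    have key : ∀ x : W, ℓ (x * π (i :: ω)) = ℓ x + ℓ (π (i :: ω)) →
        ℓ (x * σ i) = ℓ x + 1 ∧ ℓ (x * σ i * π ω) = ℓ (x * σ i) + ℓ (π ω) := by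
      intro x hx
      have hxirw : x * π (i :: ω) = x * σ i * π ω := by rw [hπc, mul_assoc]
      have h1 : ℓ (x * σ i * π ω) ≤ ℓ (x * σ i) + ℓ (π ω) := cs.length_mul_le _ _
      have hA : ℓ (x * σ i * π ω) = ℓ x + (ω.length + 1) := by
        rw [← hxirw, hx, hlen]
      rcases cs.length_mul_simple x i with hca | hcd
      · exact ⟨hca, by omega⟩
      · exfalso
        omega
    obtain ⟨ha1, ha2⟩ := key a ha
    obtain ⟨hb1, hb2⟩ := key b hb
    have step1 := le_mul_simple_iff cs i a b ha1 hb1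
    have step2 := ih hredω (a * σ i) (b * σ i) ha2 hb2
    rw [hπc, ← mul_assoc, ← mul_assoc]
    exact step1.trans step2

end Aux

theorem stmt3 (cs : CoxeterSystem M W) (a b v : W)
    (ha : cs.length (a * v) = cs.length a + cs.length v)
    (hb : cs.length (b * v) = cs.length b + cs.length v) :
    BruhatLt cs (a * v) (b * v) ↔ BruhatLt cs a b := by
  obtain ⟨ω, hred, hv⟩ := cs.exists_reduced_word' v
  subst hv
  have hle := Aux.le_mul_word cs ω hred a b ha hb
  constructor
  · rintro ⟨h1, h2⟩
    exact ⟨hle.mpr h1, fun hh => h2 (by rw [hh])⟩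
  · rintro ⟨h1, h2⟩
    exact ⟨hle.mp h1, fun hh => h2 (mul_right_cancel hh)⟩

end PaperStmt
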